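/- Let K be an algebraically closed field with a nontrivial non-archimedean absolute value. Then the homogeneous transfinite diameter of the closed unit ball B(0,1) ⊂ K^{N+1} equals 1; moreover, any bounded infinite set E containing B(0,1) has d_∞(E) ≥ 1. -/
import Mathlib

section Aux

variable {K : Type*}

/-- Ultrametric bound on determinants: if all entries have norm at most `c` with `1 ≤ c`,
then the determinant has norm at most `c ^ n`. -/
lemma aux_norm_det_le [NormedField K] [IsUltrametricDist K] {n : ℕ}
    (A : Matrix (Fin n) (Fin n) K) {c : ℝ} (hc : 0 ≤ c) (h : ∀ i j, ‖A i j‖ ≤ c) :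
    ‖A.det‖ ≤ c ^ n := by
  rw [Matrix.det_apply]
  refine IsUltrametricDist.norm_sum_le_of_forall_le_of_nonneg (by positivity) fun σ _ => ?_
  have hs : ‖Equiv.Perm.sign σ • ∏ i, A (σ i) i‖ = ‖∏ i, A (σ i) i‖ := by
    rcases Int.units_eq_one_or (Equiv.Perm.sign σ) with hs | hs <;>
      simp [hs, Units.smul_def]
  rw [hs, norm_prod]
  calc ∏ i, ‖A (σ i) i‖ ≤ ∏ _i : Fin n, c :=
        Finset.prod_le_prod (fun _ _ => norm_nonneg _) (fun i _ => h _ _)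
    _ = c ^ n := by simp

lemma aux_exists_sep [NontriviallyNormedField K] [IsUltrametricDist K] [IsAlgClosed K] :
    ∀ n : ℕ, ∃ t : Fin n → K, (∀ i, ‖t i‖ ≤ 1) ∧ ∀ i j, i ≠ j → ‖t i - t j‖ = 1 := by
  intro n
  induction n with
  | zero => exact ⟨Fin.elim0, fun i => i.elim0, fun i => i.elim0⟩
  | succ n ih =>
    obtain ⟨t, ht1, ht2⟩ := ih
    obtain ⟨x, hx1, hx2⟩ : ∃ x : K, ‖x‖ ≤ 1 ∧ ∀ i, ‖x - t i‖ = 1 := by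
      rcases Nat.eq_zero_or_pos n with rfl | hn
      · exact ⟨0, by simp, fun i => i.elim0⟩
      · set q : Polynomial K := ∏ i : Fin n, (Polynomial.X - Polynomial.C (t i)) with hq
        have hmon : q.Monic := Polynomial.monic_prod_of_monic _ _
          (fun i _ => Polynomial.monic_X_sub_C _)
        have hqdeg : q.natDegree = n := by
          rw [hq, Polynomial.natDegree_prod _ _
            (fun i _ => Polynomial.X_sub_C_ne_zero _)]
          simp
        set p : Polynomial K := q - 1 with hp
        have hdeg : p.degree = q.degree := by
          apply Polynomial.degree_sub_eq_left_of_degree_lt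
          rw [Polynomial.degree_eq_natDegree hmon.ne_zero, hqdeg, Polynomial.degree_one]
          exact_mod_cast hn
        have hpd : p.degree ≠ 0 := by
          rw [hdeg, Polynomial.degree_eq_natDegree hmon.ne_zero, hqdeg]
          exact_mod_cast hn.ne'
        obtain ⟨x, hx⟩ := IsAlgClosed.exists_root p hpd
        have hprod : ∏ i : Fin n, (x - t i) = 1 := by
          have := hx
          rw [Polynomial.IsRoot, hp, Polynomial.eval_sub, Polynomial.eval_one, sub_eq_zero,
            hq, Polynomial.eval_prod] at this
          simpa using this
        have hnorm : ∏ i : Fin n, ‖x - t i‖ = 1 := by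
          rw [← norm_prod, hprod, norm_one]
        have hxle : ‖x‖ ≤ 1 := by
          by_contra hgt
          push_neg at hgt
          have heach : ∀ i, ‖x - t i‖ = ‖x‖ := by
            intro i
            rw [sub_eq_add_neg, IsUltrametricDist.norm_add_eq_max_of_norm_ne_norm,
              norm_neg, max_eq_left ((ht1 i).trans hgt.le)]
            rw [norm_neg]
            exact fun hcon => absurd (hcon ▸ ht1 i) (not_le.mpr hgt)
          rw [Finset.prod_congr rfl (fun i _ => heach i), Finset.prod_const,
            Finset.card_univ, Fintype.card_fin] at hnorm
          exact absurd hnorm (ne_of_gt (one_lt_pow₀ hgt hn.ne'))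
        have hfle : ∀ i, ‖x - t i‖ ≤ 1 := by
          intro i
          have h := dist_triangle_max x 0 (t i)
          rw [dist_eq_norm, dist_eq_norm, dist_eq_norm, zero_sub, norm_neg, sub_zero] at h
          exact h.trans (max_le hxle (ht1 i))
        refine ⟨x, hxle, fun i => le_antisymm (hfle i) ?_⟩
        calc (1 : ℝ) = ∏ j : Fin n, ‖x - t j‖ := hnorm.symm
          _ ≤ ‖x - t i‖ := by
              rw [← Finset.mul_prod_erase Finset.univ _ (Finset.mem_univ i)]
              calc ‖x - t i‖ * ∏ j ∈ Finset.univ.erase i, ‖x - t j‖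
                  ≤ ‖x - t i‖ * 1 := by
                    apply mul_le_mul_of_nonneg_left _ (norm_nonneg _)
                    exact Finset.prod_le_one (fun j _ => norm_nonneg _) (fun j _ => hfle j)
                _ = ‖x - t i‖ := mul_one _
    refine ⟨Fin.snoc t x, ?_, ?_⟩
    · intro i
      refine Fin.lastCases ?_ ?_ i
      · simpa using hx1
      · intro j; simpa using ht1 j
    · intro i j hij
      induction i using Fin.lastCases with
      | last =>
        induction j using Fin.lastCases with
        | last => exact absurd rfl hij
        | cast j' =>
          simp only [Fin.snoc_last, Fin.snoc_castSucc]
          exact hx2 j'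
      | cast i' =>
        induction j using Fin.lastCases with
        | last =>
          simp only [Fin.snoc_last, Fin.snoc_castSucc]
          rw [← norm_neg, neg_sub]
          exact hx2 i'
        | cast j' =>
          simp only [Fin.snoc_castSucc]
          exact ht2 i' j' (fun h => hij (by rw [h]))

lemma aux_exists_sep' [NontriviallyNormedField K] [IsUltrametricDist K] [IsAlgClosed K]
    (n : ℕ) : ∃ t : Fin n → K, (∀ i, ‖t i‖ = 1) ∧ ∀ i j, i ≠ j → ‖t i - t j‖ = 1 := by
  obtain ⟨t, ht1, ht2⟩ := aux_exists_sep (K := K) (n + 1)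
  refine ⟨fun i => t i.succ - t 0, fun i => ht2 _ _ (Fin.succ_ne_zero i), fun i j hij => ?_⟩
  have : t i.succ - t 0 - (t j.succ - t 0) = t i.succ - t j.succ := by ring
  rw [this]
  exact ht2 _ _ (fun h => hij (Fin.succ_injective _ h))

end Aux


open scoped Classical in
/-- `Δ(s)` for a tuple `s` of `M` vectors in `K^{N+1}`: the product, over all
`(N+1)`-element subsets of the tuple (enumerated by strictly monotone index maps),
of the absolute value of the determinant of the matrix whose columns are these vectors.
(Taking absolute values makes the sign ambiguity irrelevant.) -/
noncomputable def absVandermonde {K : Type*} [NormedField K] {N M : ℕ}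
    (s : Fin M → (Fin (N + 1) → K)) : ℝ :=
  ∏ t ∈ Finset.univ.filter (fun t : Fin (N + 1) → Fin M => StrictMono t),
    ‖(Matrix.of fun i j => s (t j) i).det‖

/-- The `M`-diameter `d_M(E)` of a set `E ⊆ K^{N+1}`: the supremum of
`|Δ(S)|^(1/binom(M,N+1))` over all `M`-element subsets `S` of `E` (given by injective
`M`-tuples of elements of `E`); the exponent is the real number `(M.choose (N+1))⁻¹`. -/
noncomputable def mDiameter {K : Type*} [NormedField K] {N : ℕ}
    (E : Set (Fin (N + 1) → K)) (M : ℕ) : ℝ :=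
  sSup {r : ℝ | ∃ s : Fin M → (Fin (N + 1) → K),
    Function.Injective s ∧ (∀ i, s i ∈ E) ∧
      r = absVandermonde s ^ ((M.choose (N + 1) : ℝ)⁻¹)}


section Main

variable {K : Type*}

lemma aux_absV_nonneg [NormedField K] {N M : ℕ} (s : Fin M → (Fin (N + 1) → K)) :
    0 ≤ absVandermonde s :=
  Finset.prod_nonneg fun _ _ => norm_nonneg _

lemma aux_absV_le [NormedField K] [IsUltrametricDist K] {N M : ℕ} {c : ℝ} (hc : 1 ≤ c)
    (s : Fin M → (Fin (N + 1) → K)) (h : ∀ i, ‖s i‖ ≤ c) :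
    absVandermonde s ≤ (c ^ (N + 1)) ^ (M ^ (N + 1)) := by
  rw [absVandermonde]
  have hc0 : (0:ℝ) ≤ c := zero_le_one.trans hc
  calc ∏ t ∈ Finset.univ.filter (fun t : Fin (N + 1) → Fin M => StrictMono t),
        ‖(Matrix.of fun i j => s (t j) i).det‖
      ≤ ∏ _t ∈ Finset.univ.filter (fun t : Fin (N + 1) → Fin M => StrictMono t), c ^ (N + 1) := by
        refine Finset.prod_le_prod (fun _ _ => norm_nonneg _) (fun t _ => ?_)
        refine aux_norm_det_le _ hc0 (fun i j => ?_)
        exact (norm_le_pi_norm (s (t j)) i).trans (h (t j))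
    _ = (c ^ (N + 1)) ^ (Finset.univ.filter
          (fun t : Fin (N + 1) → Fin M => StrictMono t)).card := Finset.prod_const _
    _ ≤ (c ^ (N + 1)) ^ (M ^ (N + 1)) := by
        apply pow_le_pow_right₀ (one_le_pow₀ hc)
        calc (Finset.univ.filter (fun t : Fin (N + 1) → Fin M => StrictMono t)).card
            ≤ Finset.univ.card := Finset.card_filter_le _ _
          _ = M ^ (N + 1) := by simp

lemma aux_one_mem [NontriviallyNormedField K] [IsUltrametricDist K] [IsAlgClosed K] {N : ℕ}
    (E : Set (Fin (N + 1) → K)) (hE : {x : Fin (N + 1) → K | ‖x‖ ≤ 1} ⊆ E) (M : ℕ) :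
    (1 : ℝ) ∈ {r : ℝ | ∃ s : Fin M → (Fin (N + 1) → K),
      Function.Injective s ∧ (∀ i, s i ∈ E) ∧
        r = absVandermonde s ^ ((M.choose (N + 1) : ℝ)⁻¹)} := by
  obtain ⟨u, hu1, hu2⟩ := aux_exists_sep' (K := K) M
  set s : Fin M → (Fin (N + 1) → K) := fun i j => u i ^ ((j : ℕ) + 1) with hs
  have huinj : Function.Injective u := by
    intro a b hab
    by_contra h
    have := hu2 a b h
    rw [hab, sub_self, norm_zero] at this
    exact zero_ne_one this
  have hinj : Function.Injective s := by
    intro a b hab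
    apply huinj
    have := congrFun hab (0 : Fin (N + 1))
    simpa [hs] using this
  have hmem : ∀ i, s i ∈ E := by
    intro i
    apply hE
    rw [Set.mem_setOf_eq, pi_norm_le_iff_of_nonneg zero_le_one]
    intro j
    show ‖u i ^ ((j : ℕ) + 1)‖ ≤ 1
    rw [norm_pow, hu1 i, one_pow]
  have hav : absVandermonde s = 1 := by
    rw [absVandermonde]
    apply Finset.prod_eq_one
    intro σ hσ
    have hσm : StrictMono σ := (Finset.mem_filter.mp hσ).2
    have hA : (Matrix.of fun i j => s (σ j) i) =
        Matrix.of fun i j => (u (σ j)) * (Matrix.transpose (Matrix.vandermonde (u ∘ σ)) i j) := by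
      ext i j
      show u (σ j) ^ ((i : ℕ) + 1) = u (σ j) * Matrix.transpose (Matrix.vandermonde (u ∘ σ)) i j
      rw [Matrix.transpose_apply, Matrix.vandermonde_apply, Function.comp_apply, pow_succ,
        mul_comm]
    have h1 : ‖∏ j : Fin (N + 1), u (σ j)‖ = 1 := by
      rw [norm_prod]
      exact Finset.prod_eq_one fun j _ => hu1 _
    have h2 : ‖∏ i : Fin (N + 1), ∏ j ∈ Finset.Ioi i, ((u ∘ σ) j - (u ∘ σ) i)‖ = 1 := by
      rw [norm_prod]
      refine Finset.prod_eq_one fun i _ => ?_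
      rw [norm_prod]
      refine Finset.prod_eq_one fun j hj => ?_
      exact hu2 _ _ (hσm (Finset.mem_Ioi.mp hj)).ne'
    rw [hA, Matrix.det_mul_row, Matrix.det_transpose, Matrix.det_vandermonde, norm_mul,
      h1, h2, mul_one]
  exact ⟨s, hinj, hmem, by rw [hav, Real.one_rpow]⟩

end Main

/-- Let `K` be an algebraically closed field with a nontrivial non-archimedean absolute value.
Then the homogeneous transfinite diameter of the closed unit ball `B(0,1) ⊆ K^{N+1}` equals `1`
(the sequence `d_M(B(0,1))` converges to `1`); moreover any bounded infinite set `E` containing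
`B(0,1)` has `d_∞(E) ≥ 1`. -/
theorem stmt_16 {K : Type*} [NontriviallyNormedField K] [IsUltrametricDist K] [IsAlgClosed K]
    {N : ℕ} :
    Filter.Tendsto (fun M => mDiameter {x : Fin (N + 1) → K | ‖x‖ ≤ 1} M)
      Filter.atTop (nhds 1) ∧
    ∀ (E : Set (Fin (N + 1) → K)) (L : ℝ), E.Infinite → (∃ B : ℝ, ∀ x ∈ E, ‖x‖ ≤ B) →
      {x : Fin (N + 1) → K | ‖x‖ ≤ 1} ⊆ E →
      Filter.Tendsto (fun M => mDiameter E M) Filter.atTop (nhds L) → 1 ≤ L := by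
  have hexp0 : ∀ M : ℕ, (0:ℝ) ≤ ((M.choose (N + 1) : ℝ))⁻¹ := fun M => by positivity
  constructor
  · have key : ∀ M : ℕ, mDiameter {x : Fin (N + 1) → K | ‖x‖ ≤ 1} M = 1 := by
      intro M
      have mem1 := aux_one_mem {x : Fin (N + 1) → K | ‖x‖ ≤ 1} subset_rfl M
      have ub : ∀ r ∈ {r : ℝ | ∃ s : Fin M → (Fin (N + 1) → K),
          Function.Injective s ∧ (∀ i, s i ∈ {x : Fin (N + 1) → K | ‖x‖ ≤ 1}) ∧
            r = absVandermonde s ^ ((M.choose (N + 1) : ℝ)⁻¹)}, r ≤ 1 := by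
        rintro r ⟨s, -, hsm, rfl⟩
        have hA1 : absVandermonde s ≤ 1 := by
          have := aux_absV_le le_rfl s (fun i => hsm i)
          simpa using this
        exact Real.rpow_le_one (aux_absV_nonneg s) hA1 (hexp0 M)
      rw [mDiameter]
      exact le_antisymm (csSup_le ⟨1, mem1⟩ ub) (le_csSup ⟨1, ub⟩ mem1)
    have : (fun M => mDiameter {x : Fin (N + 1) → K | ‖x‖ ≤ 1} M) = fun _ => (1:ℝ) :=
      funext key
    rw [this]
    exact tendsto_const_nhds
  · rintro E L _hinf ⟨B, hB⟩ hsub htend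
    set c : ℝ := max B 1 with hcdef
    have hc : 1 ≤ c := le_max_right _ _
    have hEc : ∀ x ∈ E, ‖x‖ ≤ c := fun x hx => (hB x hx).trans (le_max_left _ _)
    have hlow : ∀ M : ℕ, 1 ≤ mDiameter E M := by
      intro M
      set D : ℝ := (c ^ (N + 1)) ^ (M ^ (N + 1)) with hDdef
      have hD1 : (1:ℝ) ≤ D := one_le_pow₀ (one_le_pow₀ hc)
      have ub : ∀ r ∈ {r : ℝ | ∃ s : Fin M → (Fin (N + 1) → K),
          Function.Injective s ∧ (∀ i, s i ∈ E) ∧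
            r = absVandermonde s ^ ((M.choose (N + 1) : ℝ)⁻¹)}, r ≤ D := by
        rintro r ⟨s, -, hsm, rfl⟩
        have hAle : absVandermonde s ≤ D := aux_absV_le hc s (fun i => hEc _ (hsm i))
        have he1 : ((M.choose (N + 1) : ℝ))⁻¹ ≤ 1 := by
          rcases Nat.eq_zero_or_pos (M.choose (N + 1)) with h | h
          · simp [h]
          · apply inv_le_one_of_one_le₀
            exact_mod_cast h
        calc absVandermonde s ^ ((M.choose (N + 1) : ℝ))⁻¹
            ≤ D ^ ((M.choose (N + 1) : ℝ))⁻¹ :=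
              Real.rpow_le_rpow (aux_absV_nonneg s) hAle (hexp0 M)
          _ ≤ D ^ (1:ℝ) := Real.rpow_le_rpow_of_exponent_le hD1 he1
          _ = D := Real.rpow_one D
      rw [mDiameter]
      exact le_csSup ⟨D, ub⟩ (aux_one_mem E hsub M)
    exact ge_of_tendsto' htend hlow
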